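/- Let P(r,s|a,b) be a nonsignaling box and define D(P) = sup over probability distributions ρ(a) on {1,…,A} of inf over ρ(r,𝐬|a)∈V(P) of the mutual information I(A;𝐒) of the channel ρ(𝐬|a)=Σ_r ρ(r,𝐬|a) with input ρ(a). Then D(P) = 0 if and only if P is local, i.e. P(r,s|a,b) = Σ_x P_A(r|a,x)P_B(s|b,x)P_S(x) for some finite set of x, conditional distributions P_A, P_B and distribution P_S. -/

import Mathlib

open scoped BigOperators

/-- A probability distribution on a finite type. -/
def IsDist {α : Type*} [Fintype α] (q : α → ℝ) : Prop :=
  (∀ x, 0 ≤ q x) ∧ ∑ x, q x = 1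

/-- Mutual information of the channel `W` with input distribution `q`
(convention `0 · log 0 = 0`, automatic since `Real.log 0 = 0`). -/
noncomputable def mutInfo {X Y : Type*} [Fintype X] [Fintype Y]
    (W : Y → X → ℝ) (q : X → ℝ) : ℝ :=
  ∑ y, ∑ x, W y x * q x * Real.log (W y x / ∑ x', W y x' * q x')

/-- A nonsignaling box `P(r,s|a,b)`. -/
def IsNSBox {R S : Type*} [Fintype R] [Fintype S] {A B : ℕ}
    (P : R → S → Fin A → Fin B → ℝ) : Prop :=
  (∀ r s a b, 0 ≤ P r s a b) ∧
  (∀ a b, ∑ r, ∑ s, P r s a b = 1) ∧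
  (∀ a r b b', ∑ s, P r s a b = ∑ s, P r s a b') ∧
  (∀ b s a a', ∑ r, P r s a b = ∑ r, P r s a' b)

/-- Membership in the set `V(P)`: `ρ(r,𝐬|a)` is a conditional probability over
`r` and sequences `𝐬 ∈ 𝓢^B` whose marginal on `(r, s_b)` is `P(r,s|a,b)`. -/
def MemV {R S : Type*} [Fintype R] [Fintype S] [DecidableEq S] {A B : ℕ}
    (P : R → S → Fin A → Fin B → ℝ)
    (ρ : R → (Fin B → S) → Fin A → ℝ) : Prop :=
  (∀ r ss a, 0 ≤ ρ r ss a) ∧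
  (∀ a, ∑ r, ∑ ss : Fin B → S, ρ r ss a = 1) ∧
  (∀ a b r s, ∑ ss : Fin B → S, (if ss b = s then ρ r ss a else 0) = P r s a b)


/-- `D(P) = sup_{ρ(a)} inf_{ρ(r,𝐬|a) ∈ V(P)} I(A;𝐒)`. -/
noncomputable def DP {R S : Type*} [Fintype R] [Fintype S] [DecidableEq S]
    {A B : ℕ} (P : R → S → Fin A → Fin B → ℝ) : ℝ :=
  sSup { d : ℝ | ∃ q : Fin A → ℝ, IsDist q ∧
    d = sInf { x : ℝ | ∃ ρ, MemV P ρ ∧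
          x = mutInfo (fun ss a => ∑ r, ρ r ss a) q } }

/-- A conditional probability `P(r,s|a,b)` is local if it is a mixture of
product distributions over a finite hidden variable. -/
def IsLocal {R S : Type*} [Fintype R] [Fintype S] {A B : ℕ}
    (P : R → S → Fin A → Fin B → ℝ) : Prop :=
  ∃ (n : ℕ) (PA : R → Fin A → Fin n → ℝ) (PB : S → Fin B → Fin n → ℝ)
      (PS : Fin n → ℝ),
    (∀ r a x, 0 ≤ PA r a x) ∧ (∀ a x, ∑ r, PA r a x = 1) ∧
    (∀ s b x, 0 ≤ PB s b x) ∧ (∀ b x, ∑ s, PB s b x = 1) ∧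
    IsDist PS ∧
    (∀ r s a b, P r s a b = ∑ x, PA r a x * PB s b x * PS x)



section AuxAll



/-- Sum over function space of a product equals product of sums. -/
lemma aux_sum_prod_pi {S : Type*} [Fintype S] {B : ℕ} (f : Fin B → S → ℝ) :
    ∑ ss : Fin B → S, ∏ b, f b (ss b) = ∏ b, ∑ s, f b s :=
  (Fintype.prod_sum f).symm

set_option maxHeartbeats 1000000 in
/-- Sum over functions with one coordinate pinned. -/
lemma aux_sum_prod_pi_fix {S : Type*} [Fintype S] [DecidableEq S] {B : ℕ}
    (f : Fin B → S → ℝ) (b : Fin B) (s : S) :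
    ∑ ss : Fin B → S, (if ss b = s then ∏ b', f b' (ss b') else 0)
      = f b s * ∏ b' ∈ Finset.univ.erase b, ∑ s', f b' s' := by
  have h : ∀ ss : Fin B → S,
      (if ss b = s then ∏ b', f b' (ss b') else 0)
        = ∏ b', (fun (b' : Fin B) (t : S) =>
            if b' = b then (if t = s then f b' t else 0) else f b' t) b' (ss b') := by
    intro ss
    by_cases h1 : ss b = s
    · rw [if_pos h1]
      refine Finset.prod_congr rfl fun b' _ => ?_
      by_cases h2 : b' = b
      · subst h2; simp [h1]
      · simp [h2]
    · rw [if_neg h1]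
      symm
      apply Finset.prod_eq_zero (Finset.mem_univ b)
      simp [h1]
  calc ∑ ss : Fin B → S, (if ss b = s then ∏ b', f b' (ss b') else 0)
      = ∑ ss : Fin B → S, ∏ b', (fun (b' : Fin B) (t : S) =>
          if b' = b then (if t = s then f b' t else 0) else f b' t) b' (ss b') :=
        Finset.sum_congr rfl fun ss _ => h ss
    _ = ∏ b', ∑ t, (fun (b' : Fin B) (t : S) =>
          if b' = b then (if t = s then f b' t else 0) else f b' t) b' t :=
        aux_sum_prod_pi (fun (b' : Fin B) (t : S) =>
          if b' = b then (if t = s then f b' t else 0) else f b' t)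
    _ = f b s * ∏ b' ∈ Finset.univ.erase b, ∑ s', f b' s' := by
        rw [← Finset.mul_prod_erase Finset.univ _ (Finset.mem_univ b)]
        refine congrArg₂ (· * ·) ?_ ?_
        · simp
        · exact Finset.prod_congr rfl fun b' hb' =>
            Finset.sum_congr rfl fun t _ => if_neg (Finset.ne_of_mem_erase hb')

/-- Refined Gibbs inequality at the level of a single term. -/
lemma aux_gibbs_term {a b : ℝ} (ha : 0 ≤ a) (hb : 0 ≤ b) (hab : b = 0 → a = 0) :
    a - b + (Real.sqrt a - Real.sqrt b) ^ 2 ≤ a * Real.log (a / b) := by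
  rcases eq_or_lt_of_le ha with h | hapos
  · have : a = 0 := h.symm
    subst this
    simp [Real.sq_sqrt hb]
  · have hbpos : 0 < b := by
      rcases eq_or_lt_of_le hb with h0 | h0
      · exact absurd (hab h0.symm) (ne_of_gt hapos)
      · exact h0
    have ht : (0:ℝ) < Real.sqrt (b / a) := Real.sqrt_pos.mpr (div_pos hbpos hapos)
    have hlog : Real.log (Real.sqrt (b / a)) ≤ Real.sqrt (b / a) - 1 :=
      Real.log_le_sub_one_of_pos ht
    have hlog2 : Real.log (Real.sqrt (b / a)) = (Real.log b - Real.log a) / 2 := by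
      rw [Real.log_sqrt (le_of_lt (div_pos hbpos hapos)),
        Real.log_div (ne_of_gt hbpos) (ne_of_gt hapos)]
    have hat : a * Real.sqrt (b / a) = Real.sqrt a * Real.sqrt b := by
      rw [Real.sqrt_div (le_of_lt hbpos) a,
        show a * (Real.sqrt b / Real.sqrt a) = a / Real.sqrt a * Real.sqrt b by ring,
        Real.div_sqrt, mul_comm]
    have haa : Real.sqrt a ^ 2 = a := Real.sq_sqrt ha
    have hbb : Real.sqrt b ^ 2 = b := Real.sq_sqrt hb
    have hrhs : Real.log (a / b) = Real.log a - Real.log b :=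
      Real.log_div (ne_of_gt hapos) (ne_of_gt hbpos)
    rw [hrhs]
    nlinarith [mul_le_mul_of_nonneg_left hlog (le_of_lt hapos)]

/-- `-(t log t) ≤ 1 - t` for `t ≥ 0`. -/
lemma aux_neg_mul_log_le {t : ℝ} (ht : 0 ≤ t) : -(t * Real.log t) ≤ 1 - t := by
  rcases eq_or_lt_of_le ht with h | h
  · simp [← h]
  · have h1 : Real.log t⁻¹ ≤ t⁻¹ - 1 := Real.log_le_sub_one_of_pos (by positivity)
    rw [Real.log_inv] at h1
    have := mul_le_mul_of_nonneg_left h1 (le_of_lt h)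
    have h2 : t * t⁻¹ = 1 := mul_inv_cancel₀ (ne_of_gt h)
    nlinarith
section MutInfoFacts

variable {X Y : Type*} [Fintype X] [Fintype Y]

lemma aux_sum_WQ (W : Y → X → ℝ) (q : X → ℝ) (hW1 : ∀ x, ∑ y, W y x = 1)
    (hq2 : ∑ x, q x = 1) : ∑ y, ∑ x, W y x * q x = 1 := by
  calc ∑ y, ∑ x, W y x * q x = ∑ x, ∑ y, W y x * q x := Finset.sum_comm
    _ = ∑ x, (∑ y, W y x) * q x := by simp_rw [Finset.sum_mul]
    _ = ∑ x, q x := Finset.sum_congr rfl fun x _ => by rw [hW1 x, one_mul]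
    _ = 1 := hq2

lemma aux_hellinger_le_mutInfo (W : Y → X → ℝ) (q : X → ℝ)
    (hW0 : ∀ y x, 0 ≤ W y x) (hW1 : ∀ x, ∑ y, W y x = 1) (hq : IsDist q) :
    ∑ y, ∑ x, (Real.sqrt (W y x * q x) - Real.sqrt ((∑ x', W y x' * q x') * q x)) ^ 2
      ≤ mutInfo W q := by
  have hq0 := hq.1
  have key : ∀ y x, W y x * q x - (∑ x', W y x' * q x') * q x
      + (Real.sqrt (W y x * q x) - Real.sqrt ((∑ x', W y x' * q x') * q x)) ^ 2
      ≤ W y x * q x * Real.log (W y x / ∑ x', W y x' * q x') := by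
    intro y x
    have hρ0 : 0 ≤ ∑ x', W y x' * q x' :=
      Finset.sum_nonneg fun x' _ => mul_nonneg (hW0 y x') (hq0 x')
    by_cases hqx : q x = 0
    · simp [hqx]
    · have hqxpos : 0 < q x := lt_of_le_of_ne (hq0 x) (Ne.symm hqx)
      have habs : (∑ x', W y x' * q x') * q x = 0 → W y x * q x = 0 := by
        intro h0
        have hρ : ∑ x', W y x' * q x' = 0 := by
          rcases mul_eq_zero.mp h0 with h | h
          · exact h
          · exact absurd h hqx
        exact (Finset.sum_eq_zero_iff_of_nonneg
          (fun x' _ => mul_nonneg (hW0 y x') (hq0 x'))).mp hρ x (Finset.mem_univ x)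
      have hg := aux_gibbs_term (mul_nonneg (hW0 y x) (hq0 x))
        (mul_nonneg hρ0 (le_of_lt hqxpos)) habs
      rwa [mul_div_mul_right _ _ hqx] at hg
  have hsum := Finset.sum_le_sum (fun y (_ : y ∈ Finset.univ) =>
    Finset.sum_le_sum (fun x (_ : x ∈ Finset.univ) => key y x))
  have h1 : ∑ y, ∑ x, W y x * q x = 1 := aux_sum_WQ W q hW1 hq.2
  have h2 : ∑ y, ∑ x, (∑ x', W y x' * q x') * q x = 1 := by
    calc ∑ y, ∑ x, (∑ x', W y x' * q x') * q x
        = ∑ y, (∑ x', W y x' * q x') * ∑ x, q x :=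
          Finset.sum_congr rfl fun y _ => by rw [Finset.mul_sum]
      _ = ∑ y, ∑ x', W y x' * q x' :=
          Finset.sum_congr rfl fun y _ => by rw [hq.2, mul_one]
      _ = 1 := h1
  have expand : ∑ y, ∑ x, (W y x * q x - (∑ x', W y x' * q x') * q x
      + (Real.sqrt (W y x * q x) - Real.sqrt ((∑ x', W y x' * q x') * q x)) ^ 2)
      = (∑ y, ∑ x, W y x * q x) - (∑ y, ∑ x, (∑ x', W y x' * q x') * q x)
      + ∑ y, ∑ x, (Real.sqrt (W y x * q x)
          - Real.sqrt ((∑ x', W y x' * q x') * q x)) ^ 2 := by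
    simp [Finset.sum_add_distrib, Finset.sum_sub_distrib]
  rw [expand, h1, h2] at hsum
  simpa [mutInfo] using hsum

lemma aux_mutInfo_nonneg (W : Y → X → ℝ) (q : X → ℝ)
    (hW0 : ∀ y x, 0 ≤ W y x) (hW1 : ∀ x, ∑ y, W y x = 1) (hq : IsDist q) :
    0 ≤ mutInfo W q :=
  le_trans (Finset.sum_nonneg fun y _ => Finset.sum_nonneg fun x _ => sq_nonneg _)
    (aux_hellinger_le_mutInfo W q hW0 hW1 hq)

lemma aux_mutInfo_le_card (W : Y → X → ℝ) (q : X → ℝ)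
    (hW0 : ∀ y x, 0 ≤ W y x) (hW1 : ∀ x, ∑ y, W y x = 1) (hq : IsDist q) :
    mutInfo W q ≤ (Fintype.card Y : ℝ) := by
  have perY : ∀ y, ∑ x, W y x * q x * Real.log (W y x / ∑ x', W y x' * q x') ≤ 1 := by
    intro y
    have hρ0 : 0 ≤ ∑ x', W y x' * q x' :=
      Finset.sum_nonneg fun x' _ => mul_nonneg (hW0 y x') (hq.1 x')
    have hterm : ∀ x, W y x * q x * Real.log (W y x / ∑ x', W y x' * q x')
        ≤ W y x * q x * (-Real.log (∑ x', W y x' * q x')) := by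
      intro x
      by_cases hqx : q x = 0
      · simp [hqx]
      by_cases hWx : W y x = 0
      · simp [hWx]
      have hWpos : 0 < W y x := lt_of_le_of_ne (hW0 y x) (Ne.symm hWx)
      have hqpos : 0 < q x := lt_of_le_of_ne (hq.1 x) (Ne.symm hqx)
      have hρpos : 0 < ∑ x', W y x' * q x' :=
        lt_of_lt_of_le (mul_pos hWpos hqpos)
          (Finset.single_le_sum (f := fun x' => W y x' * q x')
            (fun x' _ => mul_nonneg (hW0 y x') (hq.1 x')) (Finset.mem_univ x))
      have hW1x : W y x ≤ 1 := by
        have h := Finset.single_le_sum (f := fun y' => W y' x)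
          (fun y' _ => hW0 y' x) (Finset.mem_univ y)
        rwa [hW1 x] at h
      have hlog : Real.log (W y x / ∑ x', W y x' * q x')
          ≤ -Real.log (∑ x', W y x' * q x') := by
        rw [Real.log_div hWx (ne_of_gt hρpos)]
        have := Real.log_nonpos (le_of_lt hWpos) hW1x
        linarith
      exact mul_le_mul_of_nonneg_left hlog (mul_nonneg (hW0 y x) (hq.1 x))
    calc ∑ x, W y x * q x * Real.log (W y x / ∑ x', W y x' * q x')
        ≤ ∑ x, W y x * q x * (-Real.log (∑ x', W y x' * q x')) :=
          Finset.sum_le_sum fun x _ => hterm x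
      _ = (∑ x, W y x * q x) * (-Real.log (∑ x', W y x' * q x')) := by
          rw [Finset.sum_mul]
      _ = -((∑ x', W y x' * q x') * Real.log (∑ x', W y x' * q x')) := by ring
      _ ≤ 1 - ∑ x', W y x' * q x' := aux_neg_mul_log_le hρ0
      _ ≤ 1 := by linarith
  calc mutInfo W q = ∑ y, ∑ x, W y x * q x * Real.log (W y x / ∑ x', W y x' * q x') := rfl
    _ ≤ ∑ _y : Y, (1:ℝ) := Finset.sum_le_sum fun y _ => perY y
    _ = (Fintype.card Y : ℝ) := by simp [Finset.card_univ]

lemma aux_mutInfo_const (W : Y → X → ℝ) (q : X → ℝ) (hq : IsDist q)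
    (hc : ∀ y x x', W y x = W y x') : mutInfo W q = 0 := by
  have : mutInfo W q = ∑ y, ∑ x, W y x * q x * Real.log (W y x / ∑ x', W y x' * q x') := rfl
  rw [this]
  refine Finset.sum_eq_zero fun y _ => Finset.sum_eq_zero fun x _ => ?_
  have hsum : ∑ x', W y x' * q x' = W y x := by
    calc ∑ x', W y x' * q x' = ∑ x', W y x * q x' :=
          Finset.sum_congr rfl fun x' _ => by rw [hc y x' x]
      _ = W y x * ∑ x', q x' := by rw [Finset.mul_sum]
      _ = W y x := by rw [hq.2, mul_one]
  by_cases h : W y x = 0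
  · simp [h]
  · rw [hsum, div_self h, Real.log_one, mul_zero]

end MutInfoFacts
section Box

variable {R S : Type*} [Fintype R] [Fintype S] [DecidableEq S] {A B : ℕ}

/-- `V(P)` is nonempty for a nonsignaling box when `B > 0`. -/
lemma aux_exists_memV (P : R → S → Fin A → Fin B → ℝ) (hP : IsNSBox P) (hB : 0 < B) :
    ∃ ρ : R → (Fin B → S) → Fin A → ℝ, MemV P ρ := by
  obtain ⟨hP0, hP1, hPB, _hPA⟩ := hP
  set b0 : Fin B := ⟨0, hB⟩ with hb0
  set m : R → Fin A → ℝ := fun r a => ∑ s, P r s a b0 with hm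
  set F : R → Fin A → Fin B → S → ℝ :=
    fun r a b t => if b = b0 then P r t a b0 else P r t a b / m r a with hF
  have hm0 : ∀ r a, 0 ≤ m r a := fun r a => Finset.sum_nonneg fun s _ => hP0 r s a b0
  have hPle : ∀ r s a b, P r s a b ≤ m r a := by
    intro r s a b
    have h1 : P r s a b ≤ ∑ s', P r s' a b :=
      Finset.single_le_sum (fun s' _ => hP0 r s' a b) (Finset.mem_univ s)
    rwa [hPB a r b b0] at h1
  have hF0 : ∀ r a b t, 0 ≤ F r a b t := by
    intro r a b t
    by_cases h : b = b0
    · simp only [hF, if_pos h]; exact hP0 r t a b0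
    · simp only [hF, if_neg h]; exact div_nonneg (hP0 r t a b) (hm0 r a)
  have hFb0 : ∀ r a, ∑ t, F r a b0 t = m r a := by
    intro r a
    simp only [hF, if_pos rfl, hm]
  have hFne : ∀ r a b, b ≠ b0 → ∑ t, F r a b t = m r a / m r a := by
    intro r a b hb
    simp only [hF, if_neg hb]
    rw [← Finset.sum_div, hPB a r b b0]
  refine ⟨fun r ss a => ∏ b, F r a b (ss b), ?_, ?_, ?_⟩
  · exact fun r ss a => Finset.prod_nonneg fun b _ => hF0 r a b (ss b)
  · intro a
    have hrow : ∀ r, ∑ ss : Fin B → S, ∏ b, F r a b (ss b) = m r a := by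
      intro r
      have hsp : ∑ ss : Fin B → S, ∏ b, F r a b (ss b) = ∏ b, ∑ t, F r a b t :=
        aux_sum_prod_pi (F r a)
      rw [hsp, ← Finset.mul_prod_erase Finset.univ _ (Finset.mem_univ b0), hFb0 r a]
      have hrest : ∏ b ∈ Finset.univ.erase b0, ∑ t, F r a b t
          = ∏ _b ∈ Finset.univ.erase b0, (m r a / m r a) :=
        Finset.prod_congr rfl fun b hb => hFne r a b (Finset.ne_of_mem_erase hb)
      rw [hrest, Finset.prod_const]
      by_cases hmz : m r a = 0
      · simp [hmz]
      · simp [div_self hmz]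
    rw [Finset.sum_congr rfl fun r _ => hrow r]
    exact hP1 a b0
  · intro a b r s
    have hfix : ∑ ss : Fin B → S, (if ss b = s then ∏ b', F r a b' (ss b') else 0)
        = F r a b s * ∏ b' ∈ Finset.univ.erase b, ∑ t, F r a b' t :=
      aux_sum_prod_pi_fix (F r a) b s
    rw [hfix]
    by_cases hmz : m r a = 0
    · have hP00 : P r s a b = 0 := le_antisymm (hmz ▸ hPle r s a b) (hP0 r s a b)
      have hf00 : F r a b s = 0 := by
        by_cases h : b = b0
        · subst h
          simp only [hF, if_pos rfl]
          exact le_antisymm (hmz ▸ hPle r s a b0) (hP0 r s a b0)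
        · simp only [hF, if_neg h, hP00, zero_div]
      rw [hf00, zero_mul, hP00]
    · by_cases hb : b = b0
      · subst hb
        have hone : ∏ b' ∈ Finset.univ.erase b0, ∑ t, F r a b' t = 1 :=
          Finset.prod_eq_one fun b' hb' => by
            rw [hFne r a b' (Finset.ne_of_mem_erase hb'), div_self hmz]
        rw [hone, mul_one]
        simp only [hF, if_pos rfl]
      · have hb0mem : b0 ∈ Finset.univ.erase b :=
          Finset.mem_erase.mpr ⟨Ne.symm hb, Finset.mem_univ b0⟩
        rw [← Finset.mul_prod_erase (Finset.univ.erase b) _ hb0mem, hFb0 r a]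
        have hone : ∏ b' ∈ (Finset.univ.erase b).erase b0, ∑ t, F r a b' t = 1 :=
          Finset.prod_eq_one fun b' hb' => by
            rw [hFne r a b' (Finset.ne_of_mem_erase hb'), div_self hmz]
        rw [hone, mul_one]
        simp only [hF, if_neg hb]
        exact div_mul_cancel₀ _ hmz

/-- The set `V(P)` is compact. -/
lemma aux_isCompact_V (P : R → S → Fin A → Fin B → ℝ) :
    IsCompact {ρ : R → (Fin B → S) → Fin A → ℝ | MemV P ρ} := by
  have hev : ∀ (r : R) (ss : Fin B → S) (a : Fin A),
      Continuous fun ρ : R → (Fin B → S) → Fin A → ℝ => ρ r ss a :=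
    fun r ss a => by fun_prop
  have hK : IsCompact (Set.pi Set.univ fun _r : R => Set.pi Set.univ fun _ss : Fin B → S =>
      Set.pi Set.univ fun _a : Fin A => Set.Icc (0:ℝ) 1) :=
    isCompact_univ_pi fun _ => isCompact_univ_pi fun _ => isCompact_univ_pi fun _ =>
      isCompact_Icc
  refine IsCompact.of_isClosed_subset hK ?_ ?_
  · have hset : {ρ : R → (Fin B → S) → Fin A → ℝ | MemV P ρ}
        = (⋂ r, ⋂ ss, ⋂ a, {ρ : R → (Fin B → S) → Fin A → ℝ | 0 ≤ ρ r ss a})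
          ∩ ((⋂ a, {ρ : R → (Fin B → S) → Fin A → ℝ |
                ∑ r, ∑ ss : Fin B → S, ρ r ss a = 1})
          ∩ (⋂ a, ⋂ b, ⋂ r, ⋂ s, {ρ : R → (Fin B → S) → Fin A → ℝ |
              ∑ ss : Fin B → S, (if ss b = s then ρ r ss a else 0) = P r s a b})) := by
      ext ρ
      simp only [Set.mem_setOf_eq, Set.mem_inter_iff, Set.mem_iInter, MemV]
      try tauto
    rw [hset]
    refine IsClosed.inter ?_ (IsClosed.inter ?_ ?_)
    · exact isClosed_iInter fun r => isClosed_iInter fun ss => isClosed_iInter fun a =>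
        isClosed_le continuous_const (hev r ss a)
    · refine isClosed_iInter fun a => isClosed_eq ?_ continuous_const
      exact continuous_finset_sum _ fun r _ => continuous_finset_sum _ fun ss _ => hev r ss a
    · refine isClosed_iInter fun a => isClosed_iInter fun b => isClosed_iInter fun r =>
        isClosed_iInter fun s => isClosed_eq ?_ continuous_const
      refine continuous_finset_sum _ fun ss _ => ?_
      by_cases h : ss b = s
      · simp only [if_pos h]; exact hev r ss a
      · simp only [if_neg h]; exact continuous_const
  · intro ρ hρ
    simp only [Set.mem_pi, Set.mem_univ, forall_const, Set.mem_Icc]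
    intro r ss a
    refine ⟨hρ.1 r ss a, ?_⟩
    have h1 : ρ r ss a ≤ ∑ ss' : Fin B → S, ρ r ss' a :=
      Finset.single_le_sum (fun ss' _ => hρ.1 r ss' a) (Finset.mem_univ ss)
    have h2 : ∑ ss' : Fin B → S, ρ r ss' a ≤ ∑ r', ∑ ss' : Fin B → S, ρ r' ss' a :=
      Finset.single_le_sum (f := fun r' => ∑ ss' : Fin B → S, ρ r' ss' a)
        (fun r' _ => Finset.sum_nonneg fun ss' _ => hρ.1 r' ss' a) (Finset.mem_univ r)
    calc ρ r ss a ≤ _ := h1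
      _ ≤ _ := h2
      _ = 1 := hρ.2.1 a

end Box
section MainAux

variable {R S : Type*} [Fintype R] [Fintype S] [DecidableEq S] {A B : ℕ}

lemma aux_isLocal_degenerate [Nonempty R] [Nonempty S]
    (P : R → S → Fin A → Fin B → ℝ) (h : A = 0 ∨ B = 0) : IsLocal P := by
  refine ⟨1, fun _ _ _ => (Fintype.card R : ℝ)⁻¹, fun _ _ _ => (Fintype.card S : ℝ)⁻¹,
    fun _ => 1, fun _ _ _ => by positivity, fun _ _ => ?_, fun _ _ _ => by positivity,
    fun _ _ => ?_, ⟨fun _ => zero_le_one, by simp⟩, fun r s a b => ?_⟩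
  · rw [Finset.sum_const, Finset.card_univ, nsmul_eq_mul,
      mul_inv_cancel₀ (Nat.cast_ne_zero.mpr Fintype.card_ne_zero)]
  · rw [Finset.sum_const, Finset.card_univ, nsmul_eq_mul,
      mul_inv_cancel₀ (Nat.cast_ne_zero.mpr Fintype.card_ne_zero)]
  · rcases h with h | h
    · subst h; exact a.elim0
    · subst h; exact b.elim0

lemma aux_DP_eq_zero_of (P : R → S → Fin A → Fin B → ℝ)
    (h : ∀ q : Fin A → ℝ, IsDist q → sInf { x : ℝ | ∃ ρ, MemV P ρ ∧
          x = mutInfo (fun ss a => ∑ r, ρ r ss a) q } = 0) : DP P = 0 := by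
  unfold DP
  have hsub : { d : ℝ | ∃ q : Fin A → ℝ, IsDist q ∧
      d = sInf { x : ℝ | ∃ ρ, MemV P ρ ∧
          x = mutInfo (fun ss a => ∑ r, ρ r ss a) q } } ⊆ {(0:ℝ)} := by
    rintro d ⟨q, hq, rfl⟩
    exact Set.mem_singleton_iff.mpr (h q hq)
  rcases Set.subset_singleton_iff_eq.mp hsub with h' | h' <;> rw [h']
  · exact Real.sSup_empty
  · exact csSup_singleton _

/-- Local implies `D(P) = 0`. -/
lemma aux_local_DP (P : R → S → Fin A → Fin B → ℝ) (hL : IsLocal P) : DP P = 0 := by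
  classical
  obtain ⟨n, PA, PB, PS, hPA0, hPA1, hPB0, hPB1, hPS, hdec⟩ := hL
  set ρL : R → (Fin B → S) → Fin A → ℝ :=
    fun r ss a => ∑ x, PA r a x * (∏ b, PB (ss b) b x) * PS x with hρL
  have hsp : ∀ x : Fin n, ∑ ss : Fin B → S, ∏ b, PB (ss b) b x = 1 := by
    intro x
    have h1 : ∑ ss : Fin B → S, ∏ b, PB (ss b) b x = ∏ b, ∑ s, PB s b x :=
      aux_sum_prod_pi (fun b t => PB t b x)
    rw [h1]
    exact Finset.prod_eq_one fun b _ => hPB1 b x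
  have hρL0 : ∀ r ss a, 0 ≤ ρL r ss a := fun r ss a =>
    Finset.sum_nonneg fun x _ => mul_nonneg
      (mul_nonneg (hPA0 r a x) (Finset.prod_nonneg fun b _ => hPB0 (ss b) b x)) (hPS.1 x)
  have hssum : ∀ r a, ∑ ss : Fin B → S, ρL r ss a = ∑ x, PA r a x * PS x := by
    intro r a
    rw [Finset.sum_comm]
    refine Finset.sum_congr rfl fun x _ => ?_
    calc ∑ ss : Fin B → S, PA r a x * (∏ b, PB (ss b) b x) * PS x
        = PA r a x * (∑ ss : Fin B → S, ∏ b, PB (ss b) b x) * PS x := by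
          rw [Finset.mul_sum, Finset.sum_mul]
      _ = PA r a x * PS x := by rw [hsp x, mul_one]
  have hmem : MemV P ρL := by
    refine ⟨hρL0, ?_, ?_⟩
    · intro a
      have h1 : ∀ r, ∑ ss : Fin B → S, ρL r ss a = ∑ x, PA r a x * PS x := fun r => hssum r a
      rw [Finset.sum_congr rfl fun r _ => h1 r, Finset.sum_comm]
      calc ∑ x, ∑ r, PA r a x * PS x = ∑ x, (∑ r, PA r a x) * PS x := by
            refine Finset.sum_congr rfl fun x _ => ?_
            rw [Finset.sum_mul]
        _ = ∑ x, PS x := Finset.sum_congr rfl fun x _ => by rw [hPA1 a x, one_mul]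
        _ = 1 := hPS.2
    · intro a b r s
      have h1 : ∀ ss : Fin B → S, (if ss b = s then ρL r ss a else 0)
          = ∑ x, (if ss b = s then PA r a x * (∏ b', PB (ss b') b' x) * PS x else 0) := by
        intro ss
        by_cases h : ss b = s
        · simp only [if_pos h]; rfl
        · simp only [if_neg h, Finset.sum_const_zero]
      rw [Finset.sum_congr rfl fun ss _ => h1 ss, Finset.sum_comm]
      have h2 : ∀ x, ∑ ss : Fin B → S,
          (if ss b = s then PA r a x * (∏ b', PB (ss b') b' x) * PS x else 0)
          = PA r a x * PB s b x * PS x := by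
        intro x
        have h3 : ∀ ss : Fin B → S,
            (if ss b = s then PA r a x * (∏ b', PB (ss b') b' x) * PS x else 0)
            = PA r a x * (if ss b = s then ∏ b', PB (ss b') b' x else 0) * PS x := by
          intro ss
          by_cases h : ss b = s <;> simp [h]
        rw [Finset.sum_congr rfl fun ss _ => h3 ss]
        have h4 : ∑ ss : Fin B → S, PA r a x * (if ss b = s then ∏ b', PB (ss b') b' x else 0) * PS x
            = PA r a x * (∑ ss : Fin B → S, if ss b = s then ∏ b', PB (ss b') b' x else 0) * PS x := by
          rw [Finset.mul_sum, Finset.sum_mul]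
        rw [h4]
        have h5 : ∑ ss : Fin B → S, (if ss b = s then ∏ b', PB (ss b') b' x else 0)
            = PB s b x * ∏ b' ∈ Finset.univ.erase b, ∑ s', PB s' b' x :=
          aux_sum_prod_pi_fix (fun b' t => PB t b' x) b s
        rw [h5, Finset.prod_congr rfl fun b' (_ : b' ∈ Finset.univ.erase b) => hPB1 b' x,
          Finset.prod_const_one, mul_one]
      rw [Finset.sum_congr rfl fun x _ => h2 x]
      exact (hdec r s a b).symm
  have hchan : ∀ ss a, (∑ r, ρL r ss a) = ∑ x, (∏ b, PB (ss b) b x) * PS x := by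
    intro ss a
    rw [Finset.sum_comm]
    refine Finset.sum_congr rfl fun x _ => ?_
    calc ∑ r, PA r a x * (∏ b, PB (ss b) b x) * PS x
        = (∑ r, PA r a x) * ((∏ b, PB (ss b) b x) * PS x) := by
          rw [Finset.sum_mul]
          exact Finset.sum_congr rfl fun r _ => by ring
      _ = (∏ b, PB (ss b) b x) * PS x := by rw [hPA1 a x, one_mul]
  refine aux_DP_eq_zero_of P fun q hq => ?_
  have h0mem : (0:ℝ) ∈ { x : ℝ | ∃ ρ, MemV P ρ ∧
      x = mutInfo (fun ss a => ∑ r, ρ r ss a) q } := by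
    refine ⟨ρL, hmem, ?_⟩
    exact (aux_mutInfo_const _ q hq fun ss a a' => by rw [hchan ss a, hchan ss a']).symm
  have hlb : ∀ x ∈ { x : ℝ | ∃ ρ, MemV P ρ ∧
      x = mutInfo (fun ss a => ∑ r, ρ r ss a) q }, (0:ℝ) ≤ x := by
    rintro x ⟨ρ, hρ, rfl⟩
    exact aux_mutInfo_nonneg _ q (fun ss a => Finset.sum_nonneg fun r _ => hρ.1 r ss a)
      (fun a => by rw [Finset.sum_comm]; exact hρ.2.1 a) hq
  exact le_antisymm (csInf_le ⟨0, hlb⟩ h0mem) (le_csInf ⟨0, h0mem⟩ hlb)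

end MainAux
section HardDir

variable {R S : Type*} [Fintype R] [Fintype S] [DecidableEq S] {A B : ℕ}

/-- `D(P) = 0` implies local, in the nondegenerate case. -/
lemma aux_DP_local [Nonempty R] [Nonempty S] (P : R → S → Fin A → Fin B → ℝ)
    (hP : IsNSBox P) (hA : 0 < A) (hB : 0 < B) (hDP : DP P = 0) : IsLocal P := by
  classical
  obtain ⟨ρ₀, hρ₀⟩ := aux_exists_memV P hP hB
  have hA0 : (A : ℝ) ≠ 0 := Nat.cast_ne_zero.mpr (Nat.pos_iff_ne_zero.mp hA)
  set q : Fin A → ℝ := fun _ => (A : ℝ)⁻¹ with hqdef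
  have hq : IsDist q := by
    refine ⟨fun _ => by positivity, ?_⟩
    rw [Finset.sum_const, Finset.card_univ, Fintype.card_fin, nsmul_eq_mul,
      mul_inv_cancel₀ hA0]
  have hch0 : ∀ (ρ : R → (Fin B → S) → Fin A → ℝ), MemV P ρ →
      ∀ (ss : Fin B → S) (a : Fin A), 0 ≤ ∑ r, ρ r ss a :=
    fun ρ hρ ss a => Finset.sum_nonneg fun r _ => hρ.1 r ss a
  have hch1 : ∀ (ρ : R → (Fin B → S) → Fin A → ℝ), MemV P ρ →
      ∀ a : Fin A, ∑ ss : Fin B → S, ∑ r, ρ r ss a = 1 :=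
    fun ρ hρ a => by rw [Finset.sum_comm]; exact hρ.2.1 a
  set Sin : (Fin A → ℝ) → Set ℝ := fun q' => { x : ℝ | ∃ ρ, MemV P ρ ∧
      x = mutInfo (fun ss a => ∑ r, ρ r ss a) q' } with hSin
  have hDP' : sSup { d : ℝ | ∃ q' : Fin A → ℝ, IsDist q' ∧ d = sInf (Sin q') } = 0 := hDP
  have hlb : ∀ q' : Fin A → ℝ, IsDist q' → ∀ x ∈ Sin q', (0:ℝ) ≤ x := by
    rintro q' hq' x ⟨ρ, hρ, rfl⟩
    exact aux_mutInfo_nonneg _ q' (hch0 ρ hρ) (hch1 ρ hρ) hq'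
  have hmem0 : ∀ q' : Fin A → ℝ,
      mutInfo (fun ss a => ∑ r, ρ₀ r ss a) q' ∈ Sin q' := fun q' => ⟨ρ₀, hρ₀, rfl⟩
  have hbddA : BddAbove { d : ℝ | ∃ q' : Fin A → ℝ, IsDist q' ∧ d = sInf (Sin q') } := by
    refine ⟨(Fintype.card (Fin B → S) : ℝ), ?_⟩
    rintro d ⟨q', hq', rfl⟩
    exact le_trans (csInf_le ⟨0, hlb q' hq'⟩ (hmem0 q'))
      (aux_mutInfo_le_card _ q' (hch0 ρ₀ hρ₀) (hch1 ρ₀ hρ₀) hq')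
  have hinf : sInf (Sin q) = 0 := by
    refine le_antisymm ?_ (le_csInf ⟨_, hmem0 q⟩ (hlb q hq))
    rw [← hDP']
    exact le_csSup hbddA ⟨q, hq, rfl⟩
  -- minimize the Hellinger functional over V(P)
  set G : (R → (Fin B → S) → Fin A → ℝ) → ℝ := fun ρ =>
    ∑ ss : Fin B → S, ∑ a, (Real.sqrt ((∑ r, ρ r ss a) * q a)
      - Real.sqrt ((∑ a', (∑ r, ρ r ss a') * q a') * q a)) ^ 2 with hGdef
  have hGcont : Continuous G := by
    apply continuous_finset_sum; intro ss _
    apply continuous_finset_sum; intro a _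
    apply Continuous.pow
    apply Continuous.sub
    · exact Real.continuous_sqrt.comp (by fun_prop)
    · exact Real.continuous_sqrt.comp (by fun_prop)
  obtain ⟨ρm, hρmV, hρmin⟩ :=
    (aux_isCompact_V P).exists_isMinOn ⟨ρ₀, hρ₀⟩ hGcont.continuousOn
  have hρm : MemV P ρm := hρmV
  have hGnonneg : 0 ≤ G ρm :=
    Finset.sum_nonneg fun ss _ => Finset.sum_nonneg fun a _ => sq_nonneg _
  have hGlt : ∀ ε > (0:ℝ), G ρm < ε := by
    intro ε hε
    obtain ⟨x, hx, hxlt⟩ := exists_lt_of_csInf_lt ⟨_, hmem0 q⟩ (by rw [hinf]; exact hε)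
    obtain ⟨ρ, hρ, rfl⟩ := hx
    have h1 : G ρm ≤ G ρ := (isMinOn_iff.mp hρmin) ρ hρ
    have h2 : G ρ ≤ mutInfo (fun ss a => ∑ r, ρ r ss a) q :=
      aux_hellinger_le_mutInfo _ q (hch0 ρ hρ) (hch1 ρ hρ) hq
    exact lt_of_le_of_lt (le_trans h1 h2) hxlt
  have hG0 : G ρm = 0 := by
    refine le_antisymm ?_ hGnonneg
    by_contra h
    push_neg at h
    exact absurd (hGlt (G ρm) h) (lt_irrefl _)
  -- the channel of the minimizer is constant
  set w : (Fin B → S) → ℝ := fun ss => ∑ a', (∑ r, ρm r ss a') * q a' with hwdef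
  have hw0 : ∀ ss, 0 ≤ w ss :=
    fun ss => Finset.sum_nonneg fun a' _ => mul_nonneg (hch0 ρm hρm ss a') (hq.1 a')
  have hconst : ∀ (ss : Fin B → S) (a : Fin A), (∑ r, ρm r ss a) = w ss := by
    intro ss a
    have h1 := (Finset.sum_eq_zero_iff_of_nonneg
      (fun ss' (_ : ss' ∈ Finset.univ) =>
        Finset.sum_nonneg fun a' _ => sq_nonneg _)).mp hG0 ss (Finset.mem_univ ss)
    have h2 := (Finset.sum_eq_zero_iff_of_nonneg
      (fun a' (_ : a' ∈ Finset.univ) => sq_nonneg _)).mp h1 a (Finset.mem_univ a)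
    have h3 : Real.sqrt ((∑ r, ρm r ss a) * q a) = Real.sqrt (w ss * q a) :=
      sub_eq_zero.mp (pow_eq_zero_iff two_ne_zero |>.mp h2)
    have h4 : (∑ r, ρm r ss a) * q a = w ss * q a :=
      (Real.sqrt_inj (mul_nonneg (hch0 ρm hρm ss a) (hq.1 a))
        (mul_nonneg (hw0 ss) (hq.1 a))).mp h3
    have hqa : q a ≠ 0 := by simp [hqdef, hA0]
    exact mul_right_cancel₀ hqa h4
  have hwsum : ∑ ss : Fin B → S, w ss = 1 := by
    rw [hwdef]
    calc ∑ ss : Fin B → S, ∑ a', (∑ r, ρm r ss a') * q a'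
        = ∑ a', ∑ ss : Fin B → S, (∑ r, ρm r ss a') * q a' := Finset.sum_comm
      _ = ∑ a', (∑ ss : Fin B → S, ∑ r, ρm r ss a') * q a' := by
          refine Finset.sum_congr rfl fun a' _ => ?_
          rw [Finset.sum_mul]
      _ = ∑ a', q a' := Finset.sum_congr rfl fun a' _ => by rw [hch1 ρm hρm a', one_mul]
      _ = 1 := hq.2
  -- build the local model
  set n : ℕ := Fintype.card (Fin B → S) with hn
  set e : Fin n ≃ (Fin B → S) := (Fintype.equivFin (Fin B → S)).symm with he
  have hcardR : (Fintype.card R : ℝ) ≠ 0 := Nat.cast_ne_zero.mpr Fintype.card_ne_zero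
  refine ⟨n, fun r a x => if w (e x) = 0 then (Fintype.card R : ℝ)⁻¹
      else ρm r (e x) a / w (e x),
    fun s b x => if (e x) b = s then 1 else 0, fun x => w (e x), ?_, ?_, ?_, ?_, ?_, ?_⟩
  · intro r a x
    by_cases h : w (e x) = 0
    · simp only [if_pos h]; positivity
    · simp only [if_neg h]; exact div_nonneg (hρm.1 r (e x) a) (hw0 (e x))
  · intro a x
    by_cases h : w (e x) = 0
    · simp only [if_pos h]
      rw [Finset.sum_const, Finset.card_univ, nsmul_eq_mul, mul_inv_cancel₀ hcardR]
    · simp only [if_neg h]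
      rw [← Finset.sum_div, hconst (e x) a, div_self h]
  · intro s b x
    by_cases h : (e x) b = s <;> simp [h]
  · intro b x
    simp
  · exact ⟨fun x => hw0 (e x), by rw [Equiv.sum_comp e w, hwsum]⟩
  · intro r s a b
    have hstep : ∑ x, (if w (e x) = 0 then (Fintype.card R : ℝ)⁻¹
          else ρm r (e x) a / w (e x)) * (if (e x) b = s then 1 else 0) * w (e x)
        = ∑ ss : Fin B → S, (if w ss = 0 then (Fintype.card R : ℝ)⁻¹
          else ρm r ss a / w ss) * (if ss b = s then 1 else 0) * w ss :=
      Equiv.sum_comp e (fun ss => (if w ss = 0 then (Fintype.card R : ℝ)⁻¹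
          else ρm r ss a / w ss) * (if ss b = s then 1 else 0) * w ss)
    rw [hstep]
    have hterm : ∀ ss : Fin B → S, (if w ss = 0 then (Fintype.card R : ℝ)⁻¹
          else ρm r ss a / w ss) * (if ss b = s then 1 else 0) * w ss
        = (if ss b = s then ρm r ss a else 0) := by
      intro ss
      by_cases hws : w ss = 0
      · have hρ00 : ρm r ss a = 0 := by
          have h0 : ∑ r', ρm r' ss a = 0 := by rw [hconst ss a, hws]
          exact (Finset.sum_eq_zero_iff_of_nonneg
            (fun r' _ => hρm.1 r' ss a)).mp h0 r (Finset.mem_univ r)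
        simp [hws, hρ00]
      · simp only [if_neg hws]
        by_cases hbs : ss b = s
        · simp only [if_pos hbs, mul_one]
          exact div_mul_cancel₀ _ hws
        · simp [hbs]
    rw [Finset.sum_congr rfl fun ss _ => hterm ss]
    exact (hρm.2.2 a b r s).symm

end HardDir

end AuxAll

/-- A nonsignaling box has vanishing nonlocal capacity, `D(P) = 0`, if and only
if it is local. -/
theorem stmt17 {R S : Type*} [Fintype R] [Fintype S] [DecidableEq S]
    [Nonempty R] [Nonempty S] {A B : ℕ}
    (P : R → S → Fin A → Fin B → ℝ) (hP : IsNSBox P) :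
    DP P = 0 ↔ IsLocal P := by
  constructor
  · intro hDP
    rcases Nat.eq_zero_or_pos A with hA | hA
    · exact aux_isLocal_degenerate P (Or.inl hA)
    rcases Nat.eq_zero_or_pos B with hB | hB
    · exact aux_isLocal_degenerate P (Or.inr hB)
    · exact aux_DP_local P hP hA hB hDP
  · exact aux_local_DP P
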